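/- Let H be a Hilbert space, C12 : H → H bounded with ‖C12‖ < 1 and C21 = C12*, and M1 = {(f1, C21 f1) : f1 ∈ H}, M2 = {(C12 f2, f2) : f2 ∈ H} ⊆ H × H. Then M1 + M2 = H × H, i.e., every h ∈ H × H can be written as a sum of an element of M1 and an element of M2. -/
import Mathlib


open scoped RealInnerProductSpace
open ContinuousLinearMap

/-- Proposition 2.7 (surjectivity): if `‖C12‖ < 1` and `C21 = C12*`, then `M1 + M2 = H × H`,
i.e. every `(g1, g2)` can be written as `(f1, C21 f1) + (C12 f2, f2)`. -/
theorem graphs_span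
    {H : Type*} [NormedAddCommGroup H] [InnerProductSpace ℝ H] [CompleteSpace H]
    (C12 : H →L[ℝ] H) (hC : ‖C12‖ < 1) :
    ∀ g1 g2 : H, ∃ f1 f2 : H,
      g1 = f1 + C12 f2 ∧ g2 = ContinuousLinearMap.adjoint C12 f1 + f2 := by
  intro g1 g2
  set C21 : H →L[ℝ] H := ContinuousLinearMap.adjoint C12 with hC21
  have hnorm : ‖C21 * C12‖ < 1 := by
    have h1 : ‖C21‖ = ‖C12‖ := ContinuousLinearMap.adjoint.norm_map C12
    have h0 : (0:ℝ) ≤ ‖C12‖ := norm_nonneg _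
    calc ‖C21 * C12‖ ≤ ‖C21‖ * ‖C12‖ := norm_mul_le _ _
      _ = ‖C12‖ * ‖C12‖ := by rw [h1]
      _ < 1 := by nlinarith
  set u : (H →L[ℝ] H)ˣ := Units.oneSub (C21 * C12) hnorm with hu
  set f2 : H := (↑u⁻¹ : H →L[ℝ] H) (g2 - C21 g1) with hf2
  refine ⟨g1 - C12 f2, f2, by abel, ?_⟩
  have key : ((1 : H →L[ℝ] H) - C21 * C12) f2 = g2 - C21 g1 := by
    have := u.mul_inv
    calc ((1 : H →L[ℝ] H) - C21 * C12) f2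
        = ((↑u * ↑u⁻¹ : H →L[ℝ] H)) (g2 - C21 g1) := by
          rw [hf2]; rfl
      _ = g2 - C21 g1 := by rw [u.mul_inv]; simp
  have key' : f2 - C21 (C12 f2) = g2 - C21 g1 := by
    simpa [ContinuousLinearMap.sub_apply, ContinuousLinearMap.mul_apply] using key
  have : C21 (g1 - C12 f2) + f2 = C21 g1 + (f2 - C21 (C12 f2)) := by
    rw [map_sub]; abel
  rw [this, key']; abel
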